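/- Let f_{d,+}, f_{d,−} : B_d → E^d be defined on B_d = {−1,0,1}^d \ {0} as follows: for r ∈ B_d let k be the smallest index with r_k ≠ 0; if k ≤ d−1 then f_{d,+}(r) = f_{d,−}(r) = −r_k e_k; if k = d then f_{d,+}(r) = −r_d e_d and f_{d,−}(r) = r_d e_d. Then both f_{d,+} and f_{d,−} are direction-preserving on B_d: for all r_1, r_2 ∈ B_d with ‖r_1 − r_2‖_∞ ≤ 1, ‖f(r_1) − f(r_2)‖_∞ ≤ 1. -/
import Mathlib


/-- Membership in `B_d = {-1,0,1}^d \ {0}`. -/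
def inBd {d : ℕ} (r : Fin d → ℤ) : Prop :=
  (∀ i, -1 ≤ r i ∧ r i ≤ 1) ∧ r ≠ 0

lemma minIdx {d : ℕ} (r : Fin d → ℤ) (h : r ≠ 0) :
    ∃ k : Fin d, r k ≠ 0 ∧ ∀ j : Fin d, j < k → r j = 0 := by
  classical
  obtain ⟨i, hi⟩ := Function.ne_iff.mp h
  have hne : (Finset.univ.filter fun i : Fin d => r i ≠ 0).Nonempty :=
    ⟨i, by simpa using hi⟩
  refine ⟨(Finset.univ.filter fun i : Fin d => r i ≠ 0).min' hne, ?_, ?_⟩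
  · have := Finset.min'_mem _ hne
    simpa using this
  · intro j hj
    by_contra hj0
    have : (Finset.univ.filter fun i : Fin d => r i ≠ 0).min' hne ≤ j :=
      Finset.min'_le _ _ (by simpa using hj0)
    exact absurd hj (not_lt.mpr this)

lemma key {d : ℕ} (ε : Fin d → ℤ) (hε : ∀ k, ε k = 1 ∨ ε k = -1)
    (f : (Fin d → ℤ) → (Fin d → ℤ))
    (hf : ∀ r, inBd r → ∀ k : Fin d, r k ≠ 0 → (∀ j : Fin d, j < k → r j = 0) →
      f r = fun j => if j = k then ε k * r k else 0) :
    ∀ r1 r2 : Fin d → ℤ, inBd r1 → inBd r2 → (∀ i, |r1 i - r2 i| ≤ 1) →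
      ∀ i, |f r1 i - f r2 i| ≤ 1 := by
  intro r1 r2 h1 h2 hnear i
  obtain ⟨k1, hk1, hm1⟩ := minIdx r1 h1.2
  obtain ⟨k2, hk2, hm2⟩ := minIdx r2 h2.2
  rw [hf r1 h1 k1 hk1 hm1, hf r2 h2 k2 hk2 hm2]
  simp only
  by_cases e1 : i = k1 <;> by_cases e2 : i = k2
  · subst e1; subst e2
    rw [if_pos rfl, if_pos rfl]
    have h : ε i * r1 i - ε i * r2 i = ε i * (r1 i - r2 i) := by ring
    rw [h, abs_mul]
    rcases hε i with h | h <;> simp [h] <;> exact hnear i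
  · subst e1
    rw [if_pos rfl, if_neg e2, sub_zero, abs_mul]
    rcases hε i with h | h <;> simp [h] <;>
      · rcases h1.1 i with ⟨ha, hb⟩; exact abs_le.mpr ⟨ha, hb⟩
  · subst e2
    rw [if_neg e1, if_pos rfl, zero_sub, abs_neg, abs_mul]
    rcases hε i with h | h <;> simp [h] <;>
      · rcases h2.1 i with ⟨ha, hb⟩; exact abs_le.mpr ⟨ha, hb⟩
  · rw [if_neg e1, if_neg e2]
    simp

/-- The functions `f_{d,+}` and `f_{d,-}` on `B_d = {-1,0,1}^d \ {0}` (given by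
their defining specification: with `k` the smallest index with `r_k ≠ 0`,
`f_{d,+}(r) = f_{d,-}(r) = -r_k e_k` if `k ≤ d-1`, while for `k = d`,
`f_{d,+}(r) = -r_d e_d` and `f_{d,-}(r) = r_d e_d`) are both
direction-preserving on `B_d`. -/
theorem stmt17 (d : ℕ) (hd : 2 ≤ d)
    (fplus fminus : (Fin d → ℤ) → (Fin d → ℤ))
    (hplus : ∀ r : Fin d → ℤ, inBd r → ∀ k : Fin d, r k ≠ 0 →
      (∀ j : Fin d, j < k → r j = 0) →
      fplus r = fun j => if j = k then -(r k) else 0)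
    (hminus : ∀ r : Fin d → ℤ, inBd r → ∀ k : Fin d, r k ≠ 0 →
      (∀ j : Fin d, j < k → r j = 0) →
      fminus r = fun j => if j = k then (if k.val = d - 1 then r k else -(r k)) else 0) :
    (∀ r1 r2 : Fin d → ℤ, inBd r1 → inBd r2 → (∀ i, |r1 i - r2 i| ≤ 1) →
      ∀ i, |fplus r1 i - fplus r2 i| ≤ 1) ∧
    (∀ r1 r2 : Fin d → ℤ, inBd r1 → inBd r2 → (∀ i, |r1 i - r2 i| ≤ 1) →
      ∀ i, |fminus r1 i - fminus r2 i| ≤ 1) := by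
  constructor
  · refine key (fun _ => -1) (fun _ => Or.inr rfl) fplus ?_
    intro r hr k hk hm
    rw [hplus r hr k hk hm]
    funext j
    by_cases h : j = k <;> simp [h]
  · refine key (fun k => if k.val = d - 1 then 1 else -1)
      (fun k => by by_cases h : k.val = d - 1 <;> simp [h]) fminus ?_
    intro r hr k hk hm
    rw [hminus r hr k hk hm]
    funext j
    by_cases h : j = k <;> by_cases h2 : k.val = d - 1 <;> simp [h, h2]
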